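/- arXiv:1005.1744 — 2 statements merged into one kernel-verified Lean document; each statement's English description precedes it below -/
import Mathlib

section
/- Let P be an n×l binary matrix with rows P₁,…,Pₙ, let θ be any real angle, let x ∈ F₂ˡ be nonzero, fix an index j with x_j = 1, and let P⊤x be the projection of P along x (the n×l matrix whose a-th row is P_a + P_{a,j}·x). Then 2^{−l} · Σ_{s∈F₂ˡ} (−1)^{x·s} · exp( iθ · Σ_{j'=1}^n (−1)^{P_{j'}·s} ) = α_{(P⊤x, θ)} − α_{(P, θ)}. (This is the transition amplitude ⟨x| exp(iθ H_P) |0⟩ of the X-program (P,θ).) -/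
open Matrix BigOperators Finset

noncomputable section

/-- The binary code generated by the columns of `P`: all vectors `P·s`. -/
def code {m : Type*} [Fintype m] {l : ℕ} (P : Matrix m (Fin l) (ZMod 2)) :
    Finset (m → ZMod 2) :=
  Finset.image P.mulVec Finset.univ

/-- Rank function of the binary matroid of `P`: the F₂-rank of the submatrix of
rows indexed by `X`. -/
def rho {m : Type*} [Fintype m] {l : ℕ} (P : Matrix m (Fin l) (ZMod 2)) (X : Finset m) : ℕ :=
  (P.submatrix (fun i : {i // i ∈ X} => (i : m)) id).rank

/-- Tutte polynomial of the binary matroid of `P`. -/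
def tutte {m : Type*} [Fintype m] {l : ℕ} (P : Matrix m (Fin l) (ZMod 2)) (x y : ℂ) : ℂ :=
  ∑ X ∈ (Finset.univ : Finset m).powerset,
    (x - 1) ^ (rho P Finset.univ - rho P X) * (y - 1) ^ (X.card - rho P X)

/-- Normalised weight enumerator. -/
def alpha {m : Type*} [Fintype m] {l : ℕ} (P : Matrix m (Fin l) (ZMod 2)) (θ : ℝ) : ℂ :=
  (2 : ℂ) ^ (-(P.rank : ℤ)) *
    ∑ c ∈ code P, Complex.exp (Complex.I * θ * ((Fintype.card m : ℂ) - 2 * (hammingNorm c : ℂ)))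

/-- The IQP probability distribution of an X-program `(P, θ)`. -/
def iqpProb {n l : ℕ} (P : Matrix (Fin n) (Fin l) (ZMod 2)) (θ : ℝ) (x : Fin l → ZMod 2) : ℝ :=
  ‖(2 : ℂ) ^ (-(l : ℤ)) *
    ∑ a : Fin l → ZMod 2, (-1 : ℂ) ^ (x ⬝ᵥ a).val *
      Complex.exp (Complex.I * θ * ∑ j, (-1 : ℂ) ^ ((P j) ⬝ᵥ a).val)‖ ^ 2

/-- Affinification: the submatrix of rows `P_j` with `P_j ⬝ s = 1`. -/
def affin {n l : ℕ} (P : Matrix (Fin n) (Fin l) (ZMod 2)) (s : Fin l → ZMod 2) :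
    Matrix {j : Fin n // (P j) ⬝ᵥ s = 1} (Fin l) (ZMod 2) :=
  Matrix.of fun j k => P j.1 k

/-! ### Auxiliary lemmas -/

lemma pt_neg_one_pow (v : ZMod 2) : ((-1:ℂ))^v.val = 1 - 2 * (if v ≠ 0 then (1:ℂ) else 0) := by
  rcases (by decide : ∀ v : ZMod 2, v = 0 ∨ v = 1) v with rfl | rfl <;> simp [ZMod.val_one] <;> norm_num

lemma lemA {m : Type*} [Fintype m] (c : m → ZMod 2) :
    ∑ a : m, (-1 : ℂ) ^ ((c a).val) = (Fintype.card m : ℂ) - 2 * (hammingNorm c : ℂ) := by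
  classical
  simp_rw [pt_neg_one_pow]
  rw [Finset.sum_sub_distrib, ← Finset.mul_sum, Finset.sum_boole]
  rw [Finset.sum_const, Finset.card_univ, nsmul_eq_mul, mul_one]
  congr 2

lemma myRankLe {m : Type*} [Fintype m] {l : ℕ} (Q : Matrix m (Fin l) (ZMod 2)) :
    Q.rank ≤ l := by
  have h3 := LinearMap.finrank_range_add_finrank_ker Q.mulVecLin
  have h4 : Module.finrank (ZMod 2) (Fin l → ZMod 2) = l := by simp
  rw [h4] at h3
  have : Q.rank = Module.finrank (ZMod 2) (LinearMap.range Q.mulVecLin) := rfl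
  omega

lemma fiber_card {m : Type*} [Fintype m] {l : ℕ}
    (Q : Matrix m (Fin l) (ZMod 2)) (c : m → ZMod 2) (hc : c ∈ code Q) :
    (Finset.univ.filter fun s : Fin l → ZMod 2 => Q.mulVec s = c).card
      = 2 ^ (l - Q.rank) := by
  classical
  obtain ⟨s₀, -, hs₀⟩ := Finset.mem_image.mp hc
  letI hker : Fintype (LinearMap.ker Q.mulVecLin) := Fintype.ofFinite _
  have e : {s : Fin l → ZMod 2 // Q.mulVec s = c} ≃ LinearMap.ker Q.mulVecLin := by
    refine ⟨fun s => ⟨s.1 + s₀, ?_⟩, fun k => ⟨k.1 + s₀, ?_⟩, fun s => ?_, fun k => ?_⟩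
    · have := s.2
      simp only [LinearMap.mem_ker, Matrix.mulVecLin_apply, Matrix.mulVec_add, this, hs₀]
      ext a; simp [CharTwo.add_self_eq_zero]
    · have := k.2
      simp only [LinearMap.mem_ker, Matrix.mulVecLin_apply] at this
      rw [Matrix.mulVec_add, this, hs₀]; simp
    · ext b; simp [add_assoc, CharTwo.add_self_eq_zero]
    · ext b; simp [add_assoc, CharTwo.add_self_eq_zero]
  have h1 : (Finset.univ.filter fun s : Fin l → ZMod 2 => Q.mulVec s = c).card
      = Fintype.card {s : Fin l → ZMod 2 // Q.mulVec s = c} := by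
    rw [Fintype.card_subtype]
  rw [h1, Fintype.card_congr e]
  have h2 := Module.card_eq_pow_finrank (K := ZMod 2) (V := LinearMap.ker Q.mulVecLin)
  rw [ZMod.card] at h2
  rw [h2]
  congr 1
  have h3 := LinearMap.finrank_range_add_finrank_ker Q.mulVecLin
  have h4 : Module.finrank (ZMod 2) (Fin l → ZMod 2) = l := by simp
  rw [h4] at h3
  have : Q.rank = Module.finrank (ZMod 2) (LinearMap.range Q.mulVecLin) := rfl
  omega

lemma sum_mulVec {m : Type*} [Fintype m] {l : ℕ}
    (Q : Matrix m (Fin l) (ZMod 2)) (f : (m → ZMod 2) → ℂ) :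
    ∑ s : Fin l → ZMod 2, f (Q.mulVec s)
      = (2 : ℂ) ^ (l - Q.rank) * ∑ c ∈ code Q, f c := by
  classical
  rw [Finset.sum_comp f Q.mulVec, Finset.mul_sum]
  refine Finset.sum_congr rfl fun c hc => ?_
  rw [fiber_card Q c hc, nsmul_eq_mul]
  push_cast
  ring

lemma alpha_eq {m : Type*} [Fintype m] {l : ℕ}
    (Q : Matrix m (Fin l) (ZMod 2)) (θ : ℝ) :
    (2 : ℂ) ^ (-(l : ℤ)) *
      ∑ s : Fin l → ZMod 2, Complex.exp (Complex.I * θ * ∑ a, (-1 : ℂ) ^ ((Q a ⬝ᵥ s).val))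
      = alpha Q θ := by
  classical
  have key : ∀ s : Fin l → ZMod 2,
      Complex.exp (Complex.I * θ * ∑ a, (-1 : ℂ) ^ ((Q a ⬝ᵥ s).val))
      = (fun c => Complex.exp (Complex.I * θ *
          ((Fintype.card m : ℂ) - 2 * (hammingNorm c : ℂ)))) (Q.mulVec s) := by
    intro s
    congr 1
    rw [← lemA (Q.mulVec s)]
    rfl
  rw [Finset.sum_congr rfl fun s _ => key s,
    sum_mulVec Q (fun c => Complex.exp (Complex.I * θ *
      ((Fintype.card m : ℂ) - 2 * (hammingNorm c : ℂ)))), alpha, ← mul_assoc]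
  congr 1
  have h := myRankLe Q
  have h5 : ((2:ℂ)^(l - Q.rank)) = (2:ℂ) ^ ((l - Q.rank : ℕ) : ℤ) := by norm_cast
  rw [h5, ← zpow_add₀ (by norm_num : (2:ℂ) ≠ 0)]
  congr 1
  omega

def pr {l : ℕ} (x : Fin l → ZMod 2) (j : Fin l) (s : Fin l → ZMod 2) : Fin l → ZMod 2 :=
  fun b => s b + (x ⬝ᵥ s) * (if b = j then 1 else 0)

lemma zmod2_ne (v : ZMod 2) (h : v ≠ 0) : v = 1 := by revert h; revert v; decide

lemma claim2 {l : ℕ} (x : Fin l → ZMod 2) (j : Fin l) (hj : x j = 1)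
    (g : (Fin l → ZMod 2) → ℂ) :
    ∑ s : Fin l → ZMod 2, g (pr x j s)
      = 2 * ∑ s ∈ Finset.univ.filter (fun s : Fin l → ZMod 2 => x ⬝ᵥ s = 0), g s := by
  classical
  set δ : Fin l → ZMod 2 := fun b => if b = j then 1 else 0 with hδ
  have hxδ : x ⬝ᵥ δ = 1 := by
    simp only [hδ, dotProduct, mul_ite, mul_one, mul_zero, Finset.sum_ite_eq',
      Finset.mem_univ, if_true, hj]
  have hdot : ∀ s : Fin l → ZMod 2, x ⬝ᵥ (s + δ) = x ⬝ᵥ s + 1 := by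
    intro s; rw [dotProduct_add, hxδ]
  rw [← Finset.sum_filter_add_sum_filter_not Finset.univ (fun s => x ⬝ᵥ s = 0)
      (fun s => g (pr x j s))]
  have h1 : ∑ s ∈ Finset.univ.filter (fun s : Fin l → ZMod 2 => x ⬝ᵥ s = 0), g (pr x j s)
      = ∑ s ∈ Finset.univ.filter (fun s : Fin l → ZMod 2 => x ⬝ᵥ s = 0), g s := by
    refine Finset.sum_congr rfl fun s hs => ?_
    rw [Finset.mem_filter] at hs
    congr 1; funext b; simp [pr, hs.2]
  have h2 : ∑ s ∈ Finset.univ.filter (fun s : Fin l → ZMod 2 => ¬ x ⬝ᵥ s = 0), g (pr x j s)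
      = ∑ s ∈ Finset.univ.filter (fun s : Fin l → ZMod 2 => x ⬝ᵥ s = 0), g s := by
    refine Finset.sum_nbij' (fun s => s + δ) (fun s => s + δ) ?_ ?_ ?_ ?_ ?_
    · intro s hs
      rw [Finset.mem_filter] at hs ⊢
      refine ⟨Finset.mem_univ _, ?_⟩
      rw [hdot, zmod2_ne _ hs.2]; decide
    · intro s hs
      rw [Finset.mem_filter] at hs ⊢
      refine ⟨Finset.mem_univ _, ?_⟩
      rw [hdot, hs.2]; decide
    · intro s _; funext b; simp [hδ, add_assoc, CharTwo.add_self_eq_zero]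
    · intro s _; funext b; simp [hδ, add_assoc, CharTwo.add_self_eq_zero]
    · intro s hs
      rw [Finset.mem_filter] at hs
      congr 1; funext b
      simp [pr, zmod2_ne _ hs.2, hδ]
  rw [h1, h2]; ring

lemma row_identity {n l : ℕ} (P : Matrix (Fin n) (Fin l) (ZMod 2)) (x : Fin l → ZMod 2)
    (j : Fin l) (a : Fin n) (s : Fin l → ZMod 2) :
    ((Matrix.of fun a b => P a b + P a j * x b) a) ⬝ᵥ s = (P a) ⬝ᵥ (pr x j s) := by
  simp only [Matrix.of_apply, dotProduct, pr, add_mul, mul_add, Finset.sum_add_distrib,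
    mul_ite, mul_one, mul_zero, Finset.sum_ite_eq', Finset.mem_univ, if_true]
  congr 1
  simp [dotProduct, Finset.mul_sum, mul_comm, mul_assoc, mul_left_comm]

lemma pt_split (v : ZMod 2) (z : ℂ) :
    (-1:ℂ)^v.val * z = 2*(if v = 0 then z else 0) - z := by
  rcases (by decide : ∀ v : ZMod 2, v = 0 ∨ v = 1) v with rfl | rfl <;> simp [ZMod.val_one] <;> ring

/-- for nonzero `x` with `x j = 1`, the transition amplitude
`⟨x|exp(iθH_P)|0⟩ = α_{(P⊤x,θ)} − α_{(P,θ)}`, where `P⊤x` has `a`-th row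
`P_a + P_{a,j}·x`. -/
theorem amplitude_eq_alpha_proj_sub_alpha {n l : ℕ} (P : Matrix (Fin n) (Fin l) (ZMod 2))
    (θ : ℝ) (x : Fin l → ZMod 2) (hx : x ≠ 0) (j : Fin l) (hj : x j = 1) :
    (2 : ℂ) ^ (-(l : ℤ)) *
        ∑ s : Fin l → ZMod 2, (-1 : ℂ) ^ (x ⬝ᵥ s).val *
          Complex.exp (Complex.I * θ * ∑ j', (-1 : ℂ) ^ ((P j') ⬝ᵥ s).val) =
      alpha (Matrix.of fun a b => P a b + P a j * x b) θ - alpha P θ := by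
  classical
  set Q : Matrix (Fin n) (Fin l) (ZMod 2) := Matrix.of fun a b => P a b + P a j * x b with hQ
  set eP : (Fin l → ZMod 2) → ℂ :=
    fun s => Complex.exp (Complex.I * θ * ∑ j', (-1 : ℂ) ^ ((P j') ⬝ᵥ s).val) with heP
  have hQsum : ∑ s : Fin l → ZMod 2,
      Complex.exp (Complex.I * θ * ∑ a, (-1 : ℂ) ^ ((Q a ⬝ᵥ s).val))
      = ∑ s : Fin l → ZMod 2, eP (pr x j s) := by
    refine Finset.sum_congr rfl fun s _ => ?_
    have hrow : ∑ a, (-1:ℂ)^((Q a ⬝ᵥ s).val) = ∑ j', (-1:ℂ)^((P j' ⬝ᵥ pr x j s).val) :=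
      Finset.sum_congr rfl fun a _ => by rw [row_identity P x j a s]
    simp only [heP]
    exact congrArg Complex.exp (by rw [hrow])
  have hB : ∑ s : Fin l → ZMod 2, (-1 : ℂ) ^ (x ⬝ᵥ s).val * eP s
      = (∑ s : Fin l → ZMod 2,
          Complex.exp (Complex.I * θ * ∑ a, (-1 : ℂ) ^ ((Q a ⬝ᵥ s).val)))
        - ∑ s : Fin l → ZMod 2, eP s := by
    rw [hQsum, claim2 x j hj eP]
    simp_rw [pt_split]
    rw [Finset.sum_sub_distrib, ← Finset.mul_sum, ← Finset.sum_filter]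
  calc (2 : ℂ) ^ (-(l : ℤ)) *
        ∑ s : Fin l → ZMod 2, (-1 : ℂ) ^ (x ⬝ᵥ s).val * eP s
      = (2 : ℂ) ^ (-(l : ℤ)) *
          ((∑ s : Fin l → ZMod 2,
            Complex.exp (Complex.I * θ * ∑ a, (-1 : ℂ) ^ ((Q a ⬝ᵥ s).val)))
          - ∑ s : Fin l → ZMod 2, eP s) := by rw [hB]
    _ = alpha Q θ - alpha P θ := by
        rw [mul_sub, alpha_eq Q θ]
        congr 1
        exact alpha_eq P θ

end
end

section
/- Let P be an n×l binary matrix, θ a real angle, and let M be an l×l binary matrix with M² = M (an idempotent linear projector on F₂ˡ). Let K be the kernel of M, let R* be the column space of Mᵀ, and let d be the F₂-dimension of R*. Then for every x ∈ F₂ˡ with M·x = x, the marginal probability satisfies Σ_{k∈K} ℙ[X = x+k] = 2^{−d} · Σ_{s∈R*} (−1)^{x·s} · α_{(P_s, 2θ)}. -/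
open Matrix BigOperators Finset

noncomputable section

lemma zmod2_cases : ∀ u : ZMod 2, u = 0 ∨ u = 1 := by decide

lemma chiv (u : ZMod 2) : (-1:ℂ)^u.val = 1 - 2*(u.val:ℂ) := by
  rcases zmod2_cases u with h|h <;> subst h
  · rw [show ((0:ZMod 2)).val = 0 from rfl]; norm_num
  · rw [show ((1:ZMod 2)).val = 1 from rfl]; norm_num


lemma chi_add (u v : ZMod 2) : (-1:ℂ)^(u+v).val = (-1:ℂ)^u.val * (-1:ℂ)^v.val := by
  rcases zmod2_cases u with h|h <;> rcases zmod2_cases v with h'|h' <;> subst h <;> subst h' <;>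
    simp [show ((0:ZMod 2)).val = 0 from rfl, show ((1:ZMod 2)).val = 1 from rfl,
      show ((1:ZMod 2)+1).val = 0 from rfl, show ((0:ZMod 2)+1).val = 1 from rfl,
      show ((1:ZMod 2)+0).val = 1 from rfl, show ((0:ZMod 2)+0).val = 0 from rfl]

lemma chi_sq (u : ZMod 2) : (-1:ℂ)^u.val * (-1:ℂ)^u.val = 1 := by
  rcases zmod2_cases u with h|h <;> subst h <;>
    simp [show ((0:ZMod 2)).val = 0 from rfl, show ((1:ZMod 2)).val = 1 from rfl]

lemma vec_add_self {m : Type*} (v : m → ZMod 2) : v + v = 0 := by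
  funext i; exact (by decide : ∀ u : ZMod 2, u + u = 0) (v i)

lemma hn_eq {m : Type*} [Fintype m] (c : m → ZMod 2) :
    (hammingNorm c : ℕ) = ∑ j, (c j).val := by
  rw [hammingNorm, Finset.card_filter]
  refine Finset.sum_congr rfl fun j _ => ?_
  rcases zmod2_cases (c j) with h | h <;> simp [h, show ((1:ZMod 2)).val = 1 from rfl]

lemma sum_chi_card {m : Type*} [Fintype m] (c : m → ZMod 2) :
    ∑ j, (-1:ℂ)^((c j).val) = (Fintype.card m : ℂ) - 2 * (hammingNorm c : ℂ) := by
  rw [Finset.sum_congr rfl (fun j _ => chiv (c j)), Finset.sum_sub_distrib, hn_eq c]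
  push_cast
  rw [Finset.mul_sum]
  simp [Finset.card_univ]

lemma rank_le_l {m : Type*} [Fintype m] {l : ℕ} (P : Matrix m (Fin l) (ZMod 2)) : P.rank ≤ l := by
  simpa using P.rank_le_card_width

lemma card_ker {m : Type*} [Fintype m] {l : ℕ} (P : Matrix m (Fin l) (ZMod 2)) :
    (Finset.univ.filter (fun a : Fin l → ZMod 2 => P.mulVec a = 0)).card = 2 ^ (l - P.rank) := by
  have h1 : (Finset.univ.filter (fun a : Fin l → ZMod 2 => P.mulVec a = 0)).card
      = Fintype.card {a : Fin l → ZMod 2 // P.mulVec a = 0} := (Fintype.card_subtype _).symm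
  haveI : Fintype (LinearMap.ker P.mulVecLin) := Fintype.ofFinite _
  have e : {a : Fin l → ZMod 2 // P.mulVec a = 0} ≃ LinearMap.ker P.mulVecLin :=
    Equiv.subtypeEquivRight (fun a => by simp [LinearMap.mem_ker])
  have h2 : Fintype.card (LinearMap.ker P.mulVecLin)
      = 2 ^ (Module.finrank (ZMod 2) (LinearMap.ker P.mulVecLin)) := by
    simpa using Module.card_eq_pow_finrank (K := ZMod 2) (V := LinearMap.ker P.mulVecLin)
  have h3 : Module.finrank (ZMod 2) (LinearMap.ker P.mulVecLin) = l - P.rank := by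
    have h4 := LinearMap.finrank_range_add_finrank_ker (P.mulVecLin)
    have h5 : Module.finrank (ZMod 2) (Fin l → ZMod 2) = l := by simp
    rw [h5] at h4
    have h6 : P.rank = Module.finrank (ZMod 2) (LinearMap.range P.mulVecLin) := rfl
    omega
  rw [h1, Fintype.card_congr e, h2, h3]

lemma card_fiber {m : Type*} [Fintype m] {l : ℕ} (P : Matrix m (Fin l) (ZMod 2))
    {c : m → ZMod 2} (hc : c ∈ code P) :
    (Finset.univ.filter (fun a : Fin l → ZMod 2 => P.mulVec a = c)).card = 2 ^ (l - P.rank) := by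
  obtain ⟨a₀, -, ha₀⟩ := Finset.mem_image.mp hc
  rw [← card_ker P]
  apply Finset.card_nbij' (fun a => a + a₀) (fun a => a + a₀)
  · intro a ha
    simp only [Finset.mem_coe, Finset.mem_filter, Finset.mem_univ, true_and] at ha ⊢
    rw [Matrix.mulVec_add, ha, ha₀, vec_add_self]
  · intro a ha
    simp only [Finset.mem_coe, Finset.mem_filter, Finset.mem_univ, true_and] at ha ⊢
    rw [Matrix.mulVec_add, ha, ha₀, zero_add]
  · intro a _; show a + a₀ + a₀ = a; rw [add_assoc, vec_add_self, add_zero]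
  · intro a _; show a + a₀ + a₀ = a; rw [add_assoc, vec_add_self, add_zero]

lemma alpha_eq_sum {m : Type*} [Fintype m] {l : ℕ} (P : Matrix m (Fin l) (ZMod 2)) (θ : ℝ) :
    alpha P θ = (2:ℂ)^(-(l:ℤ)) * ∑ a : Fin l → ZMod 2,
      Complex.exp (Complex.I * θ * ∑ j, (-1:ℂ)^((P j ⬝ᵥ a).val)) := by
  set f : (m → ZMod 2) → ℂ := fun c => Complex.exp (Complex.I * θ *
      ((Fintype.card m : ℂ) - 2 * (hammingNorm c : ℂ))) with hf
  have h1 : ∑ a : Fin l → ZMod 2, Complex.exp (Complex.I * θ * ∑ j, (-1:ℂ)^((P j ⬝ᵥ a).val))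
      = ∑ a : Fin l → ZMod 2, f (P.mulVec a) := by
    refine Finset.sum_congr rfl fun a _ => ?_
    rw [hf]
    rw [show (∑ j, (-1:ℂ)^((P j ⬝ᵥ a).val)) = ∑ j, (-1:ℂ)^(((P.mulVec a) j).val) from rfl,
      sum_chi_card]
  rw [h1, Finset.sum_comp]
  have h2 : ∑ b ∈ Finset.univ.image P.mulVec, ({a ∈ (Finset.univ : Finset (Fin l → ZMod 2)) | P.mulVec a = b}).card • f b
      = ∑ b ∈ Finset.univ.image P.mulVec, (2 ^ (l - P.rank) : ℕ) • f b :=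
    Finset.sum_congr rfl (fun c hc => by rw [card_fiber P hc])
  rw [h2, ← Finset.smul_sum, nsmul_eq_mul, ← mul_assoc, alpha]
  have hc : (code P : Finset (m → ZMod 2)) = Finset.univ.image P.mulVec := rfl
  rw [hc]
  congr 1
  push_cast
  rw [← zpow_natCast (2:ℂ) (l - P.rank), ← zpow_add₀ (two_ne_zero)]
  congr 1
  have := rank_le_l P
  omega

lemma conj_chi (k : ℕ) : (starRingEnd ℂ) ((-1:ℂ)^k) = (-1:ℂ)^k := by
  simp

lemma S_sub {n l : ℕ} (P : Matrix (Fin n) (Fin l) (ZMod 2)) (a s : Fin l → ZMod 2) :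
    (∑ j, (-1:ℂ)^((P j ⬝ᵥ a).val)) - (∑ j, (-1:ℂ)^((P j ⬝ᵥ (a+s)).val))
      = 2 * ∑ j : {j : Fin n // P j ⬝ᵥ s = 1}, (-1:ℂ)^((P j.1 ⬝ᵥ a).val) := by
  rw [← Finset.sum_sub_distrib]
  have hsplit : ∀ j : Fin n, (-1:ℂ)^((P j ⬝ᵥ a).val) - (-1:ℂ)^((P j ⬝ᵥ (a+s)).val)
      = if P j ⬝ᵥ s = 1 then 2 * (-1:ℂ)^((P j ⬝ᵥ a).val) else 0 := by
    intro j
    rw [dotProduct_add]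
    rcases zmod2_cases (P j ⬝ᵥ s) with h|h <;> rw [h]
    · simp
    · rw [if_pos rfl, chi_add, show ((1:ZMod 2)).val = 1 from rfl]
      ring
  rw [Finset.sum_congr rfl (fun j _ => hsplit j), ← Finset.sum_filter,
    Finset.sum_subtype (p := fun j => P j ⬝ᵥ s = 1) (Finset.univ.filter fun j => P j ⬝ᵥ s = 1) (fun j => by simp)
      (fun j => 2 * (-1:ℂ)^((P j ⬝ᵥ a).val)), Finset.mul_sum]

lemma iqp_expand {n l : ℕ} (P : Matrix (Fin n) (Fin l) (ZMod 2)) (θ : ℝ) (y : Fin l → ZMod 2) :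
    (iqpProb P θ y : ℂ) = (2:ℂ)^(-(l:ℤ)) *
      ∑ s : Fin l → ZMod 2, (-1:ℂ)^((y ⬝ᵥ s).val) * alpha (affin P s) (2*θ) := by
  have key : ∀ z : ℂ, ((‖z‖ ^ 2 : ℝ) : ℂ) = z * (starRingEnd ℂ) z := fun z => by
    rw [Complex.sq_norm, Complex.mul_conj]
  have halpha : ∀ s : Fin l → ZMod 2,
      ∑ a : Fin l → ZMod 2, Complex.exp (Complex.I * ((2*θ : ℝ) : ℂ) *
        ∑ j : {j : Fin n // P j ⬝ᵥ s = 1}, (-1:ℂ)^((P j.1 ⬝ᵥ a).val))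
      = (2:ℂ)^(l:ℤ) * alpha (affin P s) (2*θ) := by
    intro s
    rw [alpha_eq_sum (affin P s) (2*θ), ← mul_assoc, ← zpow_add₀ (two_ne_zero), add_neg_cancel,
      zpow_zero, one_mul]
    rfl
  unfold iqpProb
  rw [key, _root_.map_mul, map_sum]
  have h2l : (starRingEnd ℂ) ((2:ℂ)^(-(l:ℤ))) = (2:ℂ)^(-(l:ℤ)) := by
    rw [map_zpow₀, map_ofNat]
  rw [h2l]
  have hterm : ∀ a : Fin l → ZMod 2, (starRingEnd ℂ) ((-1:ℂ)^((y ⬝ᵥ a).val) *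
      Complex.exp (Complex.I * θ * ∑ j, (-1:ℂ)^((P j ⬝ᵥ a).val)))
      = (-1:ℂ)^((y ⬝ᵥ a).val) *
        Complex.exp (-(Complex.I * θ * ∑ j, (-1:ℂ)^((P j ⬝ᵥ a).val))) := by
    intro a
    rw [_root_.map_mul, conj_chi, ← Complex.exp_conj]
    congr 2
    rw [_root_.map_mul, _root_.map_mul, Complex.conj_I, Complex.conj_ofReal, map_sum]
    simp only [conj_chi]
    ring
  rw [Finset.sum_congr rfl (fun a _ => hterm a)]
  have hAB : (∑ a : Fin l → ZMod 2, (-1:ℂ)^((y ⬝ᵥ a).val) *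
        Complex.exp (Complex.I * θ * ∑ j, (-1:ℂ)^((P j ⬝ᵥ a).val))) *
      (∑ b : Fin l → ZMod 2, (-1:ℂ)^((y ⬝ᵥ b).val) *
        Complex.exp (-(Complex.I * θ * ∑ j, (-1:ℂ)^((P j ⬝ᵥ b).val))))
      = ∑ s : Fin l → ZMod 2, (-1:ℂ)^((y ⬝ᵥ s).val) *
          ((2:ℂ)^(l:ℤ) * alpha (affin P s) (2*θ)) := by
    rw [Finset.sum_mul_sum]
    have hb : ∀ a : Fin l → ZMod 2,
        ∑ b : Fin l → ZMod 2, ((-1:ℂ)^((y ⬝ᵥ a).val) *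
          Complex.exp (Complex.I * θ * ∑ j, (-1:ℂ)^((P j ⬝ᵥ a).val))) *
          ((-1:ℂ)^((y ⬝ᵥ b).val) *
            Complex.exp (-(Complex.I * θ * ∑ j, (-1:ℂ)^((P j ⬝ᵥ b).val))))
        = ∑ s : Fin l → ZMod 2, ((-1:ℂ)^((y ⬝ᵥ a).val) *
          Complex.exp (Complex.I * θ * ∑ j, (-1:ℂ)^((P j ⬝ᵥ a).val))) *
          ((-1:ℂ)^((y ⬝ᵥ (a+s)).val) *
            Complex.exp (-(Complex.I * θ * ∑ j, (-1:ℂ)^((P j ⬝ᵥ (a+s)).val)))) := by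
      intro a
      exact (Fintype.sum_equiv (Equiv.addLeft a) _ _ (fun s => rfl)).symm
    rw [Finset.sum_congr rfl (fun a _ => hb a), Finset.sum_comm]
    refine Finset.sum_congr rfl fun s _ => ?_
    rw [← halpha s, Finset.mul_sum]
    refine Finset.sum_congr rfl fun a _ => ?_
    have hexp : Complex.exp (Complex.I * θ * ∑ j, (-1:ℂ)^((P j ⬝ᵥ a).val)) *
        Complex.exp (-(Complex.I * θ * ∑ j, (-1:ℂ)^((P j ⬝ᵥ (a+s)).val)))
        = Complex.exp (Complex.I * ((2*θ : ℝ) : ℂ) *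
            ∑ j : {j : Fin n // P j ⬝ᵥ s = 1}, (-1:ℂ)^((P j.1 ⬝ᵥ a).val)) := by
      rw [← Complex.exp_add]
      congr 1
      have h := S_sub P a s
      calc Complex.I * (θ:ℂ) * (∑ j, (-1:ℂ)^((P j ⬝ᵥ a).val)) +
            -(Complex.I * (θ:ℂ) * ∑ j, (-1:ℂ)^((P j ⬝ᵥ (a+s)).val))
          = Complex.I * (θ:ℂ) * ((∑ j, (-1:ℂ)^((P j ⬝ᵥ a).val)) -
              (∑ j, (-1:ℂ)^((P j ⬝ᵥ (a+s)).val))) := by ring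
        _ = Complex.I * (θ:ℂ) * (2 * ∑ j : {j : Fin n // P j ⬝ᵥ s = 1},
              (-1:ℂ)^((P j.1 ⬝ᵥ a).val)) := by rw [h]
        _ = Complex.I * ((2*θ : ℝ) : ℂ) * ∑ j : {j : Fin n // P j ⬝ᵥ s = 1},
              (-1:ℂ)^((P j.1 ⬝ᵥ a).val) := by push_cast; ring
    rw [dotProduct_add, chi_add]
    calc ((-1:ℂ)^((y ⬝ᵥ a).val) * Complex.exp (Complex.I * θ * ∑ j, (-1:ℂ)^((P j ⬝ᵥ a).val))) *
          (((-1:ℂ)^((y ⬝ᵥ a).val) * (-1:ℂ)^((y ⬝ᵥ s).val)) *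
            Complex.exp (-(Complex.I * θ * ∑ j, (-1:ℂ)^((P j ⬝ᵥ (a+s)).val))))
        = ((-1:ℂ)^((y ⬝ᵥ a).val) * (-1:ℂ)^((y ⬝ᵥ a).val)) * ((-1:ℂ)^((y ⬝ᵥ s).val) *
            (Complex.exp (Complex.I * θ * ∑ j, (-1:ℂ)^((P j ⬝ᵥ a).val)) *
             Complex.exp (-(Complex.I * θ * ∑ j, (-1:ℂ)^((P j ⬝ᵥ (a+s)).val))))) := by ring
      _ = (-1:ℂ)^((y ⬝ᵥ s).val) * Complex.exp (Complex.I * ((2*θ : ℝ) : ℂ) *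
            ∑ j : {j : Fin n // P j ⬝ᵥ s = 1}, (-1:ℂ)^((P j.1 ⬝ᵥ a).val)) := by
          rw [chi_sq, one_mul, hexp]
  rw [mul_mul_mul_comm, hAB, Finset.mul_sum, Finset.mul_sum]
  refine Finset.sum_congr rfl fun s _ => ?_
  have h2 : ((2:ℂ)^(-(l:ℤ)) * (2:ℂ)^(-(l:ℤ))) * (2:ℂ)^(l:ℤ) = (2:ℂ)^(-(l:ℤ)) := by
    rw [← zpow_add₀ (two_ne_zero (α := ℂ)), ← zpow_add₀ (two_ne_zero (α := ℂ))]
    congr 1; ring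
  calc ((2:ℂ)^(-(l:ℤ)) * (2:ℂ)^(-(l:ℤ))) * ((-1:ℂ)^((y ⬝ᵥ s).val) *
        ((2:ℂ)^(l:ℤ) * alpha (affin P s) (2*θ)))
      = (((2:ℂ)^(-(l:ℤ)) * (2:ℂ)^(-(l:ℤ))) * (2:ℂ)^(l:ℤ)) *
          ((-1:ℂ)^((y ⬝ᵥ s).val) * alpha (affin P s) (2*θ)) := by ring
    _ = (2:ℂ)^(-(l:ℤ)) * ((-1:ℂ)^((y ⬝ᵥ s).val) * alpha (affin P s) (2*θ)) := by rw [h2]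

lemma mem_code_iff {l : ℕ} (M : Matrix (Fin l) (Fin l) (ZMod 2)) (hM : M * M = M)
    (s : Fin l → ZMod 2) :
    s ∈ code Mᵀ ↔ ∀ k : Fin l → ZMod 2, M.mulVec k = 0 → k ⬝ᵥ s = 0 := by
  constructor
  · intro hs k hk
    obtain ⟨t, -, rfl⟩ := Finset.mem_image.mp hs
    rw [Matrix.dotProduct_mulVec, Matrix.vecMul_transpose, hk, zero_dotProduct]
  · intro h
    have hMs : Mᵀ.mulVec s = s := by
      funext i
      have hk : M.mulVec (Pi.single i 1 + M.mulVec (Pi.single i 1)) = 0 := by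
        rw [Matrix.mulVec_add, Matrix.mulVec_mulVec, hM]
        exact vec_add_self _
      have h0 := h _ hk
      rw [add_dotProduct, ← Matrix.vecMul_transpose, ← Matrix.dotProduct_mulVec,
        single_dotProduct, single_dotProduct, one_mul, one_mul] at h0
      exact ((by decide : ∀ a b : ZMod 2, a + b = 0 → b = a) _ _ h0)
    exact Finset.mem_image.mpr ⟨s, Finset.mem_univ s, hMs⟩

lemma sum_chi_ker {l : ℕ} (M : Matrix (Fin l) (Fin l) (ZMod 2)) (hM : M * M = M)
    (s : Fin l → ZMod 2) :
    ∑ k ∈ Finset.univ.filter (fun k : Fin l → ZMod 2 => M.mulVec k = 0),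
        (-1:ℂ)^((k ⬝ᵥ s).val)
      = if s ∈ code Mᵀ then (2:ℂ)^((l - M.rank : ℕ)) else 0 := by
  by_cases hs : s ∈ code Mᵀ
  · rw [if_pos hs]
    have h := (mem_code_iff M hM s).mp hs
    rw [Finset.sum_congr rfl (fun k hk => by
      rw [h k (Finset.mem_filter.mp hk).2, show ((0:ZMod 2)).val = 0 from rfl, pow_zero]),
      Finset.sum_const, card_ker M, nsmul_eq_mul, mul_one]
    push_cast
    ring
  · rw [if_neg hs]
    obtain ⟨k₀, hk₀, hk₀s⟩ : ∃ k₀, M.mulVec k₀ = 0 ∧ k₀ ⬝ᵥ s = 1 := by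
      by_contra hcon
      push_neg at hcon
      refine hs ((mem_code_iff M hM s).mpr (fun k hk => ?_))
      rcases zmod2_cases (k ⬝ᵥ s) with h|h
      · exact h
      · exact absurd h (hcon k hk)
    have hswap : ∑ k ∈ Finset.univ.filter (fun k : Fin l → ZMod 2 => M.mulVec k = 0),
          (-1:ℂ)^((k ⬝ᵥ s).val)
        = ∑ k ∈ Finset.univ.filter (fun k : Fin l → ZMod 2 => M.mulVec k = 0),
          -((-1:ℂ)^((k ⬝ᵥ s).val)) := by
      refine Finset.sum_nbij' (fun k => k + k₀) (fun k => k + k₀) ?_ ?_ ?_ ?_ ?_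
      · intro a ha
        simp only [Finset.mem_filter, Finset.mem_univ, true_and] at ha ⊢
        rw [Matrix.mulVec_add, ha, hk₀, vec_add_self]
      · intro a ha
        simp only [Finset.mem_filter, Finset.mem_univ, true_and] at ha ⊢
        rw [Matrix.mulVec_add, ha, hk₀, vec_add_self]
      · intro a _; show a + k₀ + k₀ = a; rw [add_assoc, vec_add_self, add_zero]
      · intro a _; show a + k₀ + k₀ = a; rw [add_assoc, vec_add_self, add_zero]
      · intro a _
        show _ = -((-1:ℂ)^(((a + k₀) ⬝ᵥ s).val))
        rw [add_dotProduct, chi_add, hk₀s, show ((1:ZMod 2)).val = 1 from rfl]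
        ring
    rw [Finset.sum_neg_distrib] at hswap
    exact CharZero.eq_neg_self_iff.mp hswap

/-- for an idempotent projector `M` on `F₂ˡ`, with `K = ker M`,
`R* = column space of Mᵀ` and `d = dim R*`, for `x` in the range of `M`:
`Σ_{k∈K} ℙ[X=x+k] = 2^{−d} · Σ_{s∈R*} (−1)^{x·s} · α_{(P_s,2θ)}`. -/
theorem marginal_eq_alpha_sum {n l : ℕ} (P : Matrix (Fin n) (Fin l) (ZMod 2)) (θ : ℝ)
    (M : Matrix (Fin l) (Fin l) (ZMod 2)) (hM : M * M = M)
    (x : Fin l → ZMod 2) (hx : M.mulVec x = x) :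
    ((∑ k ∈ Finset.univ.filter (fun k : Fin l → ZMod 2 => M.mulVec k = 0),
        iqpProb P θ (x + k) : ℝ) : ℂ) =
      (2 : ℂ) ^ (-(Mᵀ.rank : ℤ)) *
        ∑ s ∈ code Mᵀ, (-1 : ℂ) ^ (x ⬝ᵥ s).val * alpha (affin P s) (2 * θ) := by
  rw [Complex.ofReal_sum]
  have step1 : ∀ k ∈ Finset.univ.filter (fun k : Fin l → ZMod 2 => M.mulVec k = 0),
      ((iqpProb P θ (x+k) : ℝ) : ℂ) = (2:ℂ)^(-(l:ℤ)) *
      ∑ s : Fin l → ZMod 2, ((-1:ℂ)^((x ⬝ᵥ s).val) * (-1:ℂ)^((k ⬝ᵥ s).val))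
        * alpha (affin P s) (2*θ) := by
    intro k _
    rw [iqp_expand]
    congr 1
    refine Finset.sum_congr rfl fun s _ => ?_
    rw [add_dotProduct, chi_add]
  rw [Finset.sum_congr rfl step1, ← Finset.mul_sum, Finset.sum_comm]
  have step2 : ∀ s : Fin l → ZMod 2,
      ∑ k ∈ Finset.univ.filter (fun k : Fin l → ZMod 2 => M.mulVec k = 0),
        ((-1:ℂ)^((x ⬝ᵥ s).val) * (-1:ℂ)^((k ⬝ᵥ s).val)) * alpha (affin P s) (2*θ)
      = (if s ∈ code Mᵀ then (2:ℂ)^((l - M.rank : ℕ)) else 0) *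
          ((-1:ℂ)^((x ⬝ᵥ s).val) * alpha (affin P s) (2*θ)) := by
    intro s
    rw [← sum_chi_ker M hM s, Finset.sum_mul]
    refine Finset.sum_congr rfl fun k _ => ?_
    ring
  rw [Finset.sum_congr rfl (fun s _ => step2 s)]
  simp only [ite_mul, zero_mul]
  rw [Finset.sum_ite_mem, Finset.univ_inter, ← Finset.mul_sum, ← mul_assoc]
  congr 1
  rw [Matrix.rank_transpose, ← zpow_natCast (2:ℂ) (l - M.rank),
    ← zpow_add₀ (two_ne_zero (α := ℂ))]
  congr 1
  have := rank_le_l M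
  omega

end
end
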